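/- Suppose a sequence x₁,…,x_T in a convex set K and convex differentiable functions f₁,…,f_T satisfy: (i) f_t(x_t) − f_t(x*) ≤ ∇f_t(x_t)ᵀ(x_t − x*); (ii) η∇f_t(x_t)ᵀ(x_t − x*) ≤ [∇R(x_{t+1}) − ∇R(x_t)]ᵀ(x* − x_t) + 8G²Δ²η²; (iii) B_R(x_t, x_{t+1}) ≤ 2η²G²Δ²; and (iv) B_R(x*, x₁) ≤ D². Then the regret satisfies Σ_t [f_t(x_t) − f_t(x*)] ≤ D²/η + 10G²Δ²Tη, and in particular for η = D/(√10 GΔ√T) the regret is at most 2√10 · DGΔ√T. -/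

import Mathlib

open Finset in
/-- Nonnegativity of the Bregman divergence of a convex differentiable function. -/
lemma bregman_nonneg {n : ℕ} {R : EuclideanSpace ℝ (Fin n) → ℝ}
    {g : EuclideanSpace ℝ (Fin n)} {b : EuclideanSpace ℝ (Fin n)}
    (hconv : ConvexOn ℝ Set.univ R) (hg : HasGradientAt R g b)
    (a : EuclideanSpace ℝ (Fin n)) :
    (inner ℝ g (a - b) : ℝ) ≤ R a - R b := by
  set L : ℝ →ᵃ[ℝ] EuclideanSpace ℝ (Fin n) := AffineMap.lineMap b a with hL
  have hφconv : ConvexOn ℝ Set.univ (R ∘ L) := by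
    have := hconv.comp_affineMap L
    simpa using this
  have hL0 : L 0 = b := by simp [hL]
  have hL1 : L 1 = a := by simp [hL]
  have hLd : HasDerivAt (fun s : ℝ => L s) (a - b) 0 := by
    have : (fun s : ℝ => L s) = fun s : ℝ => s • (a - b) + b := by
      funext s; simp [hL, AffineMap.lineMap_apply]
    rw [this]
    simpa using ((hasDerivAt_id (0 : ℝ)).smul_const (a - b)).add_const b
  have hd : HasDerivAt (R ∘ L) ((inner ℝ g (a - b) : ℝ)) 0 := by
    have hF : HasFDerivAt R ((InnerProductSpace.toDual ℝ _) g) b := hg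
    rw [← hL0] at hF
    have := hF.comp_hasDerivAt 0 hLd
    simpa [InnerProductSpace.toDual_apply_apply] using this
  have hslope := hφconv.le_slope_of_hasDerivWithinAt_Ioi (Set.mem_univ (0 : ℝ))
    (Set.mem_univ (1 : ℝ)) one_pos hd.hasDerivWithinAt
  simpa [slope_def_field, hL0, hL1] using hslope

/-- Regret bound of the interior-point algorithm, given the per-step bounds:
the regret is at most `D²/η + 10G²Δ²Tη`, and with
`η = D/(√10 GΔ√T)` it is at most `2√10 · DGΔ√T`. -/
theorem regret_bound
    {n : ℕ} (K : Set (EuclideanSpace ℝ (Fin n))) (hKconv : Convex ℝ K)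
    (R : EuclideanSpace ℝ (Fin n) → ℝ)
    (gR : EuclideanSpace ℝ (Fin n) → EuclideanSpace ℝ (Fin n))
    (hRconv : ConvexOn ℝ Set.univ R)
    (hRgrad : ∀ w, HasGradientAt R (gR w) w)
    (T : ℕ) (hT : 0 < T)
    (f : ℕ → EuclideanSpace ℝ (Fin n) → ℝ)
    (gf : ℕ → EuclideanSpace ℝ (Fin n) → EuclideanSpace ℝ (Fin n))
    (hfconv : ∀ t, ConvexOn ℝ Set.univ (f t))
    (hfgrad : ∀ t w, HasGradientAt (f t) (gf t w) w)
    (x : ℕ → EuclideanSpace ℝ (Fin n)) (hxK : ∀ t, x t ∈ K)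
    (xstar : EuclideanSpace ℝ (Fin n)) (hxstar : xstar ∈ K)
    (G Δ D η : ℝ) (hG : 0 < G) (hΔ : 0 < Δ) (hD : 0 < D) (hη : 0 < η)
    -- Bregman divergence:
    (B : EuclideanSpace ℝ (Fin n) → EuclideanSpace ℝ (Fin n) → ℝ)
    (hB : ∀ a b, B a b = R a - R b - (inner ℝ (gR b) (a - b) : ℝ))
    -- (i) convexity bound:
    (h1 : ∀ t ∈ Finset.range T,
      f t (x t) - f t xstar ≤ (inner ℝ (gf t (x t)) (x t - xstar) : ℝ))
    -- (ii) per-step inequality: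
    (h2 : ∀ t ∈ Finset.range T,
      η * (inner ℝ (gf t (x t)) (x t - xstar) : ℝ) ≤
        (inner ℝ (gR (x (t + 1)) - gR (x t)) (xstar - x t) : ℝ) +
          8 * G ^ 2 * Δ ^ 2 * η ^ 2)
    -- (iii) step Bregman bound:
    (h3 : ∀ t ∈ Finset.range T, B (x t) (x (t + 1)) ≤ 2 * η ^ 2 * G ^ 2 * Δ ^ 2)
    -- (iv) initial Bregman bound:
    (h4 : B xstar (x 0) ≤ D ^ 2) :
    (∑ t ∈ Finset.range T, (f t (x t) - f t xstar)) ≤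
        D ^ 2 / η + 10 * G ^ 2 * Δ ^ 2 * T * η ∧
      (η = D / (Real.sqrt 10 * G * Δ) * (1 / Real.sqrt T) →
        (∑ t ∈ Finset.range T, (f t (x t) - f t xstar)) ≤
          2 * Real.sqrt 10 * D * G * Δ * Real.sqrt T) := by
  set S : ℝ := ∑ t ∈ Finset.range T, (f t (x t) - f t xstar) with hS
  -- three-point identity
  have h3pt : ∀ t : ℕ, (inner ℝ (gR (x (t + 1)) - gR (x t)) (xstar - x t) : ℝ) =
      B xstar (x t) - B xstar (x (t + 1)) + B (x t) (x (t + 1)) := by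
    intro t
    simp only [hB, inner_sub_left, inner_sub_right]
    ring
  -- Bregman nonnegativity at the end point
  have hBnn : 0 ≤ B xstar (x T) := by
    rw [hB]
    have := bregman_nonneg hRconv (hRgrad (x T)) xstar
    linarith
  -- main bound on η * S
  have hmain : η * S ≤ D ^ 2 + 10 * G ^ 2 * Δ ^ 2 * η ^ 2 * T := by
    have step : ∀ t ∈ Finset.range T, η * (f t (x t) - f t xstar) ≤
        (B xstar (x t) - B xstar (x (t + 1))) + B (x t) (x (t + 1)) +
          8 * G ^ 2 * Δ ^ 2 * η ^ 2 := by
      intro t ht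
      have := h2 t ht
      rw [h3pt t] at this
      have h1' := h1 t ht
      nlinarith [mul_le_mul_of_nonneg_left h1' hη.le]
    calc η * S = ∑ t ∈ Finset.range T, η * (f t (x t) - f t xstar) := by
          rw [hS, Finset.mul_sum]
      _ ≤ ∑ t ∈ Finset.range T, ((B xstar (x t) - B xstar (x (t + 1))) +
            B (x t) (x (t + 1)) + 8 * G ^ 2 * Δ ^ 2 * η ^ 2) :=
          Finset.sum_le_sum step
      _ = (B xstar (x 0) - B xstar (x T)) +
            (∑ t ∈ Finset.range T, B (x t) (x (t + 1))) +
            T * (8 * G ^ 2 * Δ ^ 2 * η ^ 2) := by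
          rw [Finset.sum_add_distrib, Finset.sum_add_distrib,
            Finset.sum_range_sub' (fun t => B xstar (x t)), Finset.sum_const,
            Finset.card_range, nsmul_eq_mul]
      _ ≤ (D ^ 2 - 0) + (T * (2 * η ^ 2 * G ^ 2 * Δ ^ 2)) +
            T * (8 * G ^ 2 * Δ ^ 2 * η ^ 2) := by
          gcongr
          · calc (∑ t ∈ Finset.range T, B (x t) (x (t + 1))) ≤
                ∑ _t ∈ Finset.range T, (2 * η ^ 2 * G ^ 2 * Δ ^ 2) :=
                  Finset.sum_le_sum h3
              _ = T * (2 * η ^ 2 * G ^ 2 * Δ ^ 2) := by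
                  rw [Finset.sum_const, Finset.card_range, nsmul_eq_mul]
      _ = D ^ 2 + 10 * G ^ 2 * Δ ^ 2 * η ^ 2 * T := by ring
  have hfirst : S ≤ D ^ 2 / η + 10 * G ^ 2 * Δ ^ 2 * T * η := by
    rw [div_add' _ _ _ hη.ne', le_div_iff₀ hη]
    nlinarith [hmain]
  refine ⟨hfirst, fun hηval => ?_⟩
  have hsT : (0 : ℝ) < Real.sqrt T := Real.sqrt_pos.mpr (by exact_mod_cast hT)
  have hs10 : (0 : ℝ) < Real.sqrt 10 := Real.sqrt_pos.mpr (by norm_num)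
  have hsT2 : Real.sqrt T ^ 2 = (T : ℝ) := Real.sq_sqrt (by positivity)
  have hs102 : Real.sqrt 10 ^ 2 = (10 : ℝ) := Real.sq_sqrt (by norm_num)
  set c : ℝ := Real.sqrt 10 * G * Δ * Real.sqrt T with hc
  have hcpos : 0 < c := mul_pos (mul_pos (mul_pos hs10 hG) hΔ) hsT
  have h10 : Real.sqrt 10 * Real.sqrt 10 = 10 := Real.mul_self_sqrt (by norm_num)
  have hTT : Real.sqrt T * Real.sqrt T = (T : ℝ) := Real.mul_self_sqrt (by positivity)
  have hcc : c * c = 10 * G ^ 2 * Δ ^ 2 * T := by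
    rw [hc]
    linear_combination (G ^ 2 * Δ ^ 2 * (Real.sqrt T * Real.sqrt T)) * h10 +
      (G ^ 2 * Δ ^ 2 * 10) * hTT
  have hη' : η = D / c := by rw [hηval, hc, div_mul_div_comm, mul_one]
  have heq : D ^ 2 / η + 10 * G ^ 2 * Δ ^ 2 * T * η =
      2 * Real.sqrt 10 * D * G * Δ * Real.sqrt T := by
    rw [hη']
    rw [div_div_eq_mul_div]
    field_simp
    linear_combination D * hcc - (D + 1) * G ^ 2 * Δ ^ 2 * Real.sqrt (T : ℝ) ^ 2 * hs102 - (D + 1) * G ^ 2 * Δ ^ 2 * 10 * hsT2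
  linarith [hfirst]
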